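/- Let k ≥ 2 and let L be a pure (k−1)-dimensional simplicial complex on a finite vertex set V such that for every A ⊆ V with |A| ≥ k, the number of (k−1)-faces of L contained in A is at most (k−1)|A| − (k²−k−1). Then for any vertex v ∉ V, the cone v∗L is a pure k-dimensional simplicial complex on V ∪ {v} such that for every A ⊆ V ∪ {v} with |A| ≥ k+1, the number of k-faces of v∗L contained in A is at most k|A| − ((k+1)²−(k+1)−1). -/

import Mathlib

open scoped BigOperators

section Defs

variable {α : Type*}

/-- A family of finite sets is a simplicial complex if it is closed under taking subsets. -/
def IsComplex (K : Finset (Finset α)) : Prop :=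
  ∀ σ ∈ K, ∀ τ ⊆ σ, τ ∈ K

/-- `K` is pure with all facets of cardinality `d` (i.e. pure `(d-1)`-dimensional). -/
def PureCx (d : ℕ) (K : Finset (Finset α)) : Prop :=
  (∀ σ ∈ K, σ.card ≤ d) ∧ ∀ σ ∈ K, ∃ τ ∈ K, σ ⊆ τ ∧ τ.card = d

/-- `K` is `(d-1)`-dimensional: the largest faces have `d` elements. -/
def DimPred (d : ℕ) (K : Finset (Finset α)) : Prop :=
  (∀ σ ∈ K, σ.card ≤ d) ∧ ∃ σ ∈ K, σ.card = d

/-- The increasing embedding of `Fin (d-1)` into `Fin d` skipping `r`. -/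
def skipF {d : ℕ} (r : Fin d) (k : Fin (d - 1)) : Fin d :=
  if (k : ℕ) < (r : ℕ) then ⟨(k : ℕ), by have := k.isLt; omega⟩
  else ⟨(k : ℕ) + 1, by have := k.isLt; omega⟩

/-- The cofactor `C_{r,c}(M)` (0-indexed). -/
noncomputable def cofactor {d : ℕ} (M : Matrix (Fin d) (Fin d) ℝ) (r c : Fin d) : ℝ :=
  (-1 : ℝ) ^ ((r : ℕ) + (c : ℕ)) * (M.submatrix (skipF r) (skipF c)).det

/-- The matrix `M_{p,σ}` whose `j`-th column is `(p(v_j), 1)`, `v_j` the `j`-th smallest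
element of `σ`. -/
noncomputable def faceMat [LinearOrder α] (d : ℕ) (p : α → Fin (d - 1) → ℝ)
    (σ : Finset α) (hσ : σ.card = d) : Matrix (Fin d) (Fin d) ℝ :=
  fun i j => if h : (i : ℕ) < d - 1 then p (σ.orderEmbOfFin hσ j) ⟨i, h⟩ else 1

/-- The volume-rigidity matrix `𝔙(K,p)`. -/
noncomputable def volMatrix [LinearOrder α] (d : ℕ) (K : Finset (Finset α))
    (p : α → Fin (d - 1) → ℝ) :
    Matrix (α × Fin (d - 1)) {σ : Finset α // σ ∈ K ∧ σ.card = d} ℝ :=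
  fun vi σ =>
    if h : vi.1 ∈ σ.1 then
      cofactor (faceMat d p σ.1 σ.2.2) (Fin.castLE (Nat.sub_le d 1) vi.2)
        ((σ.1.orderIsoOfFin σ.2.2).symm ⟨vi.1, h⟩)
    else 0

/-- `p : V → ℝ^{d-1}` is generic: its coordinates are algebraically independent over `ℚ`. -/
def GenericEmb (d : ℕ) (V : Finset α) (p : α → Fin (d - 1) → ℝ) : Prop :=
  AlgebraicIndependent ℚ (fun x : {a // a ∈ V} × Fin (d - 1) => p x.1.1 x.2)

/-- `K`, with vertex set `V`, is volume-rigid. -/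
def VolumeRigid [Fintype α] [LinearOrder α] (d : ℕ) (V : Finset α)
    (K : Finset (Finset α)) : Prop :=
  ∀ p : α → Fin (d - 1) → ℝ, GenericEmb d V p →
    (volMatrix d K p).rank = (d - 1) * V.card - (d ^ 2 - d - 1)

/-- `sign(τ,σ) = (-1)^j` where the unique element of `σ \ τ` is the `j`-th smallest
element of `σ` (1-based). -/
def faceSgn [LinearOrder α] (τ σ : Finset α) : ℤ :=
  if h : (σ \ τ).card = 1 then
    (-1 : ℤ) ^
      (((σ.sort (· ≤ ·)).idxOf ((σ \ τ).min' (Finset.card_pos.mp (by omega)))) + 1)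
  else 0

/-- The boundary of the integral `(d-1)`-chain `z` of `K` vanishes. -/
def BoundaryZeroZ [LinearOrder α] (d : ℕ) (K : Finset (Finset α)) (z : Finset α → ℤ) : Prop :=
  ∀ τ : Finset α, τ.card = d - 1 →
    ∑ σ ∈ K.filter (fun σ => σ.card = d ∧ τ ⊆ σ), faceSgn τ σ * z σ = 0

/-- The boundary of the real `(d-1)`-chain `z` of `K` vanishes. -/
def BoundaryZeroR [LinearOrder α] (d : ℕ) (K : Finset (Finset α)) (z : Finset α → ℝ) : Prop :=
  ∀ τ : Finset α, τ.card = d - 1 →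
    ∑ σ ∈ K.filter (fun σ => σ.card = d ∧ τ ⊆ σ), (faceSgn τ σ : ℝ) * z σ = 0

/-- `K` is a minimal cycle over `ℤ`. -/
def IsMinimalCycleZ [LinearOrder α] (d : ℕ) (K : Finset (Finset α)) : Prop :=
  (∃ z : Finset α → ℤ, (∀ σ, ¬(σ ∈ K ∧ σ.card = d) → z σ = 0) ∧
      BoundaryZeroZ d K z ∧ ∀ σ ∈ K, σ.card = d → z σ ≠ 0) ∧
  ∀ z : Finset α → ℤ, (∀ σ, ¬(σ ∈ K ∧ σ.card = d) → z σ = 0) →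
    BoundaryZeroZ d K z → z ≠ 0 → ∀ σ ∈ K, σ.card = d → z σ ≠ 0

/-- `K` is `(d-1, d²-d-1)`-sparse on vertex set `V`. -/
def Sparse [DecidableEq α] (d : ℕ) (V : Finset α) (K : Finset (Finset α)) : Prop :=
  ∀ A ⊆ V, d ≤ A.card →
    (K.filter (fun σ => σ.card = d ∧ σ ⊆ A)).card ≤ (d - 1) * A.card - (d ^ 2 - d - 1)

/-- `K` is `(d-1, d²-d-1)`-tight on vertex set `V`. -/
def Tight [DecidableEq α] (d : ℕ) (V : Finset α) (K : Finset (Finset α)) : Prop :=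
  Sparse d V K ∧
    (K.filter (fun σ => σ.card = d)).card = (d - 1) * V.card - (d ^ 2 - d - 1)

end Defs

section Shifting

/-- The partial order `σ ≤_p τ`: equal cardinalities and the `i`-th smallest element of `σ`
is at most the `i`-th smallest element of `τ`, for every `i`. -/
def pLE {n : ℕ} (σ τ : Finset (Fin n)) : Prop :=
  List.Forall₂ (· ≤ ·) (σ.sort (· ≤ ·)) (τ.sort (· ≤ ·))

/-- The strict partial order `σ <_p τ`. -/
def pLT {n : ℕ} (σ τ : Finset (Fin n)) : Prop := pLE σ τ ∧ σ ≠ τ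

/-- `f_σ = f_{σ_1} ∧ ⋯ ∧ f_{σ_k}` in the exterior algebra of `ℝ^n`. -/
noncomputable def extWedge {n : ℕ} (f : Fin n → (Fin n → ℝ)) (σ : Finset (Fin n)) :
    ExteriorAlgebra ℝ (Fin n → ℝ) :=
  ((σ.sort (· ≤ ·)).map (fun i => ExteriorAlgebra.ι ℝ (f i))).prod

/-- The standard basis of `ℝ^n`. -/
noncomputable def stdVec (n : ℕ) : Fin n → (Fin n → ℝ) := fun i => Pi.single i 1

/-- The subspace spanned by `{e_τ : τ ∉ K, |τ| = k}`. -/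
noncomputable def faceIdeal {n : ℕ} (K : Finset (Finset (Fin n))) (k : ℕ) :
    Submodule ℝ (ExteriorAlgebra ℝ (Fin n → ℝ)) :=
  Submodule.span ℝ
    {x | ∃ τ : Finset (Fin n), τ ∉ K ∧ τ.card = k ∧ x = extWedge (stdVec n) τ}

/-- The quotient map `q`. -/
noncomputable def qMap {n : ℕ} (K : Finset (Finset (Fin n))) (k : ℕ) :
    ExteriorAlgebra ℝ (Fin n → ℝ) → ExteriorAlgebra ℝ (Fin n → ℝ) ⧸ faceIdeal K k :=
  fun x => Submodule.Quotient.mk x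

/-- The shifted family `Δ^<(K)` associated with a strict order `lt` on subsets of `[n]`,
computed with respect to the basis `f`. -/
def DeltaLt {n : ℕ} (K : Finset (Finset (Fin n))) (f : Fin n → (Fin n → ℝ))
    (lt : Finset (Fin n) → Finset (Fin n) → Prop) : Set (Finset (Fin n)) :=
  {σ | qMap K σ.card (extWedge f σ) ∉
    Submodule.span ℝ (qMap K σ.card '' (extWedge f '' {τ | lt τ σ ∧ τ.card = σ.card}))}

/-- `Δ^p(K)`, computed with respect to the basis `f`. -/
def DeltaP {n : ℕ} (K : Finset (Finset (Fin n))) (f : Fin n → (Fin n → ℝ)) :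
    Set (Finset (Fin n)) := DeltaLt K f pLT

/-- `f` is a generic basis of `ℝ^n`: it is a basis, `f_1 = (1,…,1)`, and the coordinates of
`f_2, …, f_n` are algebraically independent over `ℚ`. -/
def GenericBasis {n : ℕ} (f : Fin n → (Fin n → ℝ)) : Prop :=
  (∃ b : Module.Basis (Fin n) ℝ (Fin n → ℝ), ⇑b = f) ∧
  (∀ i : Fin n, (i : ℕ) = 0 → f i = 1) ∧
  AlgebraicIndependent ℚ (fun x : {i : Fin n // (i : ℕ) ≠ 0} × Fin n => f x.1.1 x.2)

/-- The set `{1,3,4,…,d,n}` (1-based), i.e. `{0,2,3,…,d-1,n-1}` as a subset of `Fin n`. -/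
def sigma0 (d n : ℕ) : Finset (Fin n) :=
  Finset.univ.filter (fun i : Fin n =>
    (i : ℕ) = 0 ∨ (2 ≤ (i : ℕ) ∧ (i : ℕ) + 1 ≤ d) ∨ (i : ℕ) + 1 = n)

end Shifting

/-- coning a pure `(k-1)`-dimensional `(k-1, k²-k-1)`-sparse complex
yields a pure `k`-dimensional `(k, (k+1)²-(k+1)-1)`-sparse complex. -/
private lemma sparse_cone_arith (k a : ℕ) (hk : 2 ≤ k) (ha : k + 1 ≤ a) :
    (k - 1) * (a - 1) - (k ^ 2 - k - 1) ≤ k * a - ((k + 1) ^ 2 - (k + 1) - 1) := by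
  have key : (k - 1) * (a - 1) + (a + k) = k * a + 1 := by
    obtain ⟨k', rfl⟩ : ∃ k', k = k' + 1 := ⟨k - 1, by omega⟩
    obtain ⟨a', rfl⟩ : ∃ a', a = a' + 1 := ⟨a - 1, by omega⟩
    simp [Nat.add_sub_cancel]
    ring
  have hQ : k * k + k ≤ k * a := by
    calc k * k + k = k * (k + 1) := by ring
      _ ≤ k * a := Nat.mul_le_mul_left _ ha
  have hR : 2 * k ≤ k * k := Nat.mul_le_mul_right _ hk
  have e1 : k ^ 2 = k * k := by ring
  have e2 : (k + 1) ^ 2 - (k + 1) - 1 = k * k + k - 1 := by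
    have : (k + 1) ^ 2 = k * k + 2 * k + 1 := by ring
    omega
  rw [e1, e2]
  set P := (k - 1) * (a - 1) with hP
  set Q := k * a with hQ'
  set R := k * k with hR'
  omega

theorem sparse_cone {α : Type*} [DecidableEq α] (k : ℕ) (hk : 2 ≤ k)
    (V : Finset α) (L : Finset (Finset α)) (hL : IsComplex L) (hpure : PureCx k L)
    (hLV : ∀ σ ∈ L, σ ⊆ V)
    (hsparse : ∀ A ⊆ V, k ≤ A.card →
      (L.filter (fun σ => σ.card = k ∧ σ ⊆ A)).card ≤ (k - 1) * A.card - (k ^ 2 - k - 1))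
    (v : α) (hv : v ∉ V) :
    IsComplex (L ∪ L.image (insert v)) ∧
    PureCx (k + 1) (L ∪ L.image (insert v)) ∧
    (∀ σ ∈ L ∪ L.image (insert v), σ ⊆ insert v V) ∧
    ∀ A ⊆ insert v V, k + 1 ≤ A.card →
      ((L ∪ L.image (insert v)).filter (fun σ => σ.card = k + 1 ∧ σ ⊆ A)).card ≤
        k * A.card - ((k + 1) ^ 2 - (k + 1) - 1) := by
  have hvnot : ∀ ρ ∈ L, v ∉ ρ := fun ρ hρ hvρ => hv (hLV ρ hρ hvρ)
  have hform : ∀ σ ∈ L ∪ L.image (insert v), σ.card = k + 1 →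
      ∃ ρ ∈ L, v ∉ ρ ∧ σ = insert v ρ := by
    intro σ hσ hcard
    rcases Finset.mem_union.mp hσ with h | h
    · exact absurd hcard (by have := hpure.1 σ h; omega)
    · obtain ⟨ρ, hρ, rfl⟩ := Finset.mem_image.mp h
      exact ⟨ρ, hρ, hvnot ρ hρ, rfl⟩
  refine ⟨?_, ?_, ?_, ?_⟩
  · -- IsComplex
    intro σ hσ τ hτ
    rcases Finset.mem_union.mp hσ with h | h
    · exact Finset.mem_union_left _ (hL σ h τ hτ)
    · obtain ⟨ρ, hρ, rfl⟩ := Finset.mem_image.mp h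
      by_cases hvτ : v ∈ τ
      · refine Finset.mem_union_right _ (Finset.mem_image.mpr ⟨τ.erase v, ?_, ?_⟩)
        · apply hL ρ hρ
          intro x hx
          have hxτ := Finset.mem_of_mem_erase hx
          rcases Finset.mem_insert.mp (hτ hxτ) with h1 | h1
          · exact absurd h1 (Finset.ne_of_mem_erase hx)
          · exact h1
        · exact Finset.insert_erase hvτ
      · apply Finset.mem_union_left
        apply hL ρ hρ
        intro x hx
        rcases Finset.mem_insert.mp (hτ hx) with h1 | h1
        · subst h1; exact absurd hx hvτ
        · exact h1
  · constructor
    · intro σ hσ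
      rcases Finset.mem_union.mp hσ with h | h
      · exact (hpure.1 σ h).trans (Nat.le_succ k)
      · obtain ⟨ρ, hρ, rfl⟩ := Finset.mem_image.mp h
        exact (Finset.card_insert_le _ _).trans (Nat.succ_le_succ (hpure.1 ρ hρ))
    · intro σ hσ
      rcases Finset.mem_union.mp hσ with h | h
      · obtain ⟨τ, hτ, hsub, hcard⟩ := hpure.2 σ h
        refine ⟨insert v τ, Finset.mem_union_right _ (Finset.mem_image_of_mem _ hτ),
          hsub.trans (Finset.subset_insert _ _), ?_⟩
        rw [Finset.card_insert_of_notMem (hvnot τ hτ), hcard]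
      · obtain ⟨ρ, hρ, rfl⟩ := Finset.mem_image.mp h
        obtain ⟨τ, hτ, hsub, hcard⟩ := hpure.2 ρ hρ
        refine ⟨insert v τ, Finset.mem_union_right _ (Finset.mem_image_of_mem _ hτ),
          Finset.insert_subset_insert _ hsub, ?_⟩
        rw [Finset.card_insert_of_notMem (hvnot τ hτ), hcard]
  · intro σ hσ
    rcases Finset.mem_union.mp hσ with h | h
    · exact (hLV σ h).trans (Finset.subset_insert _ _)
    · obtain ⟨ρ, hρ, rfl⟩ := Finset.mem_image.mp h
      exact Finset.insert_subset_insert _ (hLV ρ hρ)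
  · intro A hA hAcard
    by_cases hvA : v ∈ A
    · have hA' : A.erase v ⊆ V := by
        intro x hx
        rcases Finset.mem_insert.mp (hA (Finset.mem_of_mem_erase hx)) with h1 | h1
        · exact absurd h1 (Finset.ne_of_mem_erase hx)
        · exact h1
      have hcardA' : (A.erase v).card = A.card - 1 := Finset.card_erase_of_mem hvA
      have hmain := hsparse (A.erase v) hA' (by omega)
      have hle : ((L ∪ L.image (insert v)).filter (fun σ => σ.card = k + 1 ∧ σ ⊆ A)).card
          ≤ (L.filter (fun σ => σ.card = k ∧ σ ⊆ A.erase v)).card := by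
        apply Finset.card_le_card_of_injOn (fun σ => σ.erase v)
        · intro σ hσ
          simp only [Finset.mem_coe, Finset.mem_filter] at hσ ⊢
          obtain ⟨hσK, hcard, hsub⟩ := hσ
          obtain ⟨ρ, hρ, hvρ, rfl⟩ := hform σ hσK hcard
          rw [Finset.erase_insert hvρ]
          refine ⟨hρ, ?_, ?_⟩
          · have := Finset.card_insert_of_notMem hvρ; omega
          · intro x hx
            exact Finset.mem_erase.mpr ⟨fun hxv => hvρ (hxv ▸ hx),
              hsub (Finset.mem_insert_of_mem hx)⟩
        · intro σ hσ τ hτ h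
          simp only [Finset.coe_filter, Set.mem_setOf_eq, Finset.mem_filter] at hσ hτ
          obtain ⟨ρ, hρ, hvρ, rfl⟩ := hform σ hσ.1 hσ.2.1
          obtain ⟨ρ', hρ', hvρ', rfl⟩ := hform τ hτ.1 hτ.2.1
          simp only [Finset.erase_insert hvρ, Finset.erase_insert hvρ'] at h
          rw [h]
      calc ((L ∪ L.image (insert v)).filter (fun σ => σ.card = k + 1 ∧ σ ⊆ A)).card
          ≤ (L.filter (fun σ => σ.card = k ∧ σ ⊆ A.erase v)).card := hle
        _ ≤ (k - 1) * (A.erase v).card - (k ^ 2 - k - 1) := hmain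
        _ = (k - 1) * (A.card - 1) - (k ^ 2 - k - 1) := by rw [hcardA']
        _ ≤ k * A.card - ((k + 1) ^ 2 - (k + 1) - 1) := sparse_cone_arith k A.card hk hAcard
    · have hempty : (L ∪ L.image (insert v)).filter (fun σ => σ.card = k + 1 ∧ σ ⊆ A) = ∅ := by
        rw [Finset.filter_eq_empty_iff]
        rintro σ hσ ⟨hcard, hsub⟩
        obtain ⟨ρ, hρ, hvρ, rfl⟩ := hform σ hσ hcard
        exact hvA (hsub (Finset.mem_insert_self _ _))
      rw [hempty]
      simp
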